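/- Let G be a graph with n nodes whose edges are enumerated e_1, e_2, ..., e_m, let s ≥ 1 be an integer with n²s ≥ 7, and define the weight function w by w(e_i) = 2^{i−1}. Then for any s even cycles C_1, ..., C_s in G, there exists an integer j with 2 ≤ j ≤ n²s such that c_w(C_i) is not divisible by j for every 1 ≤ i ≤ s; consequently the weight function e_i ↦ (2^{i−1} mod j), whose values are bounded by n²s, gives nonzero circulation to each of C_1, ..., C_s. -/

import Mathlib

/-- The alternating sum `a₁ - a₂ + a₃ - ⋯` of a list. -/
def altSum : List ℤ → ℤ
  | [] => 0
  | a :: l => a - altSum l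

/-- The circulation of a cycle (given by the list of its edges in cyclic order):
the absolute value of the alternating sum of the edge weights. -/
def circulation {V : Type*} (w : Sym2 V → ℤ) (l : List (Sym2 V)) : ℤ :=
  |altSum (l.map w)|

lemma altSum_eq_sum (L : List ℤ) :
    altSum L = ∑ i ∈ Finset.range L.length, (-1 : ℤ) ^ i * L.getD i 0 := by
  induction L with
  | nil => simp [altSum]
  | cons a L ih =>
    rw [altSum, ih, List.length_cons, Finset.sum_range_succ']
    simp [pow_succ, mul_comm, mul_assoc, Finset.sum_neg_distrib, sub_eq_add_neg]
    exact add_comm _ _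

lemma altSum_sub_emod_dvd {V : Type*} (j : ℤ) (l : List (Sym2 V)) (w : Sym2 V → ℤ) :
    j ∣ altSum (l.map w) - altSum (l.map fun e => w e % j) := by
  induction l with
  | nil => simp [altSum]
  | cons a l ih =>
    simp only [List.map_cons, altSum]
    have h1 : j ∣ w a - w a % j := Int.dvd_self_sub_of_emod_eq rfl
    have := dvd_sub h1 ih
    convert this using 1
    · rfl
    ring

lemma geom_two_sum (m : ℕ) : ∑ a ∈ Finset.range m, (2 : ℤ) ^ a = 2 ^ m - 1 := by
  induction m with
  | zero => simp
  | succ n ihn => rw [Finset.sum_range_succ, ihn]; ring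

lemma sum_pow_two_le {k m : ℕ} (b : ℕ → ℕ)
    (hinj : Set.InjOn b (Finset.range k)) (hm : ∀ i < k, b i < m) :
    ∑ i ∈ Finset.range k, (2 : ℤ) ^ (b i) ≤ 2 ^ m - 1 := by
  have h1 : ∑ i ∈ Finset.range k, (2 : ℤ) ^ (b i)
      = ∑ a ∈ (Finset.range k).image b, (2 : ℤ) ^ a := by
    rw [Finset.sum_image]
    intro x hx y hy hxy
    exact hinj (by simpa using hx) (by simpa using hy) hxy
  rw [h1]
  have h2 : (Finset.range k).image b ⊆ Finset.range m := by
    intro a ha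
    simp only [Finset.mem_image, Finset.mem_range] at ha ⊢
    obtain ⟨i, hi, rfl⟩ := ha
    exact hm i hi
  calc ∑ a ∈ (Finset.range k).image b, (2 : ℤ) ^ a
      ≤ ∑ a ∈ Finset.range m, (2 : ℤ) ^ a :=
        Finset.sum_le_sum_of_subset_of_nonneg h2 (fun _ _ _ => by positivity)
    _ = 2 ^ m - 1 := geom_two_sum m

lemma signed_sum_ne_zero {k : ℕ} (hk : 0 < k) (b : ℕ → ℕ)
    (hinj : Set.InjOn b (Finset.range k)) :
    (∑ i ∈ Finset.range k, (-1 : ℤ) ^ i * 2 ^ (b i)) ≠ 0 := by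
  obtain ⟨i₀, hi₀, hmax⟩ := Finset.exists_max_image (Finset.range k) b ⟨0, Finset.mem_range.2 hk⟩
  intro h0
  rw [← Finset.add_sum_erase _ _ hi₀] at h0
  have heq : ∑ i ∈ (Finset.range k).erase i₀, (-1 : ℤ) ^ i * 2 ^ (b i)
      = -((-1 : ℤ) ^ i₀ * 2 ^ (b i₀)) := by linarith
  have habs : |∑ i ∈ (Finset.range k).erase i₀, (-1 : ℤ) ^ i * 2 ^ (b i)| = 2 ^ (b i₀) := by
    rw [heq, abs_neg, abs_mul, abs_pow, abs_neg, abs_one, one_pow, one_mul, abs_pow]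
    norm_num
  have hle : |∑ i ∈ (Finset.range k).erase i₀, (-1 : ℤ) ^ i * 2 ^ (b i)|
      ≤ 2 ^ (b i₀) - 1 := by
    calc |∑ i ∈ (Finset.range k).erase i₀, (-1 : ℤ) ^ i * 2 ^ (b i)|
        ≤ ∑ i ∈ (Finset.range k).erase i₀, |(-1 : ℤ) ^ i * 2 ^ (b i)| :=
          Finset.abs_sum_le_sum_abs _ _
      _ = ∑ i ∈ (Finset.range k).erase i₀, (2 : ℤ) ^ (b i) := by
          apply Finset.sum_congr rfl; intro i _
          rw [abs_mul, abs_pow, abs_neg, abs_one, one_pow, one_mul, abs_pow]; norm_num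
      _ ≤ 2 ^ (b i₀) - 1 := by
          have h1 : ∑ i ∈ (Finset.range k).erase i₀, (2 : ℤ) ^ (b i)
              = ∑ a ∈ ((Finset.range k).erase i₀).image b, (2 : ℤ) ^ a := by
            rw [Finset.sum_image]
            intro x hx y hy hxy
            exact hinj (by simpa using (Finset.mem_of_mem_erase hx))
              (by simpa using (Finset.mem_of_mem_erase hy)) hxy
          rw [h1]
          have h2 : ((Finset.range k).erase i₀).image b ⊆ Finset.range (b i₀) := by
            intro a ha
            simp only [Finset.mem_image, Finset.mem_range] at ha ⊢
            obtain ⟨i, hi, rfl⟩ := ha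
            have hne : i ≠ i₀ := Finset.ne_of_mem_erase hi
            have hile := hmax i (Finset.mem_of_mem_erase hi)
            rcases lt_or_eq_of_le hile with h | h
            · exact h
            · exact absurd (hinj (by simpa using Finset.mem_of_mem_erase hi)
                (by simpa using hi₀) h) hne
          calc ∑ a ∈ ((Finset.range k).erase i₀).image b, (2 : ℤ) ^ a
              ≤ ∑ a ∈ Finset.range (b i₀), (2 : ℤ) ^ a :=
                Finset.sum_le_sum_of_subset_of_nonneg h2 (fun _ _ _ => by positivity)
            _ = 2 ^ (b i₀) - 1 := geom_two_sum _
  rw [habs] at hle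
  linarith

lemma altSum_pow_facts {V : Type*} (num : Sym2 V → ℕ) (m : ℕ) (l : List (Sym2 V))
    (hnd : l.Nodup) (hne : l ≠ [])
    (hinj : ∀ e ∈ l, ∀ f ∈ l, num e = num f → e = f)
    (hm : ∀ e ∈ l, num e < m) :
    altSum (l.map fun e => (2 : ℤ) ^ num e) ≠ 0 ∧
      (altSum (l.map fun e => (2 : ℤ) ^ num e)).natAbs < 2 ^ m := by
  set b : ℕ → ℕ := fun i => (l.map num).getD i 0 with hb
  have hlen : 0 < l.length := List.length_pos_iff.mpr hne
  have hbi : ∀ i (hi : i < l.length), b i = num l[i] := by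
    intro i hi
    rw [hb]
    simp only
    rw [List.getD_eq_getElem _ _ (by simpa using hi), List.getElem_map]
  have hbinj : Set.InjOn b (Finset.range l.length) := by
    intro i hi j hj hij
    simp only [Finset.coe_range, Set.mem_Iio] at hi hj
    rw [hbi i hi, hbi j hj] at hij
    exact (hnd.getElem_inj_iff).mp
      (hinj _ (List.getElem_mem _) _ (List.getElem_mem _) hij)
  have hrepr : altSum (l.map fun e => (2 : ℤ) ^ num e)
      = ∑ i ∈ Finset.range l.length, (-1 : ℤ) ^ i * 2 ^ (b i) := by
    rw [altSum_eq_sum, List.length_map]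
    apply Finset.sum_congr rfl
    intro i hi
    have hi' : i < l.length := Finset.mem_range.mp hi
    rw [List.getD_eq_getElem _ _ (by simpa using hi'), List.getElem_map, hbi i hi']
  constructor
  · rw [hrepr]
    exact signed_sum_ne_zero hlen b hbinj
  · rw [hrepr]
    have h1 : |∑ i ∈ Finset.range l.length, (-1 : ℤ) ^ i * 2 ^ (b i)| ≤ 2 ^ m - 1 := by
      calc |∑ i ∈ Finset.range l.length, (-1 : ℤ) ^ i * 2 ^ (b i)|
          ≤ ∑ i ∈ Finset.range l.length, |(-1 : ℤ) ^ i * 2 ^ (b i)| :=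
            Finset.abs_sum_le_sum_abs _ _
        _ = ∑ i ∈ Finset.range l.length, (2 : ℤ) ^ (b i) := by
            apply Finset.sum_congr rfl
            intro i _
            rw [abs_mul, abs_pow, abs_neg, abs_one, one_pow, one_mul, abs_pow]
            norm_num
        _ ≤ 2 ^ m - 1 := sum_pow_two_le b hbinj (fun i hi => by
            rw [hbi i hi]; exact hm _ (List.getElem_mem _))
    have h2 : ((∑ i ∈ Finset.range l.length, (-1 : ℤ) ^ i * 2 ^ (b i)).natAbs : ℤ)
        < (2 : ℤ) ^ m := by
      rw [Int.abs_eq_natAbs] at h1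
      omega
    have h3 : ((2:ℕ) ^ m : ℤ) = (2:ℤ) ^ m := by push_cast; ring
    rw [← h3] at h2
    exact_mod_cast h2

lemma two_mul_le_two_pow : ∀ t : ℕ, 2 * t ≤ 2 ^ t
  | 0 => by norm_num
  | 1 => by norm_num
  | (t + 2) => by
      have ih := two_mul_le_two_pow (t + 1)
      have h2 : (2:ℕ) ≤ 2 ^ (t + 1) := Nat.one_lt_two_pow (by omega)
      calc 2 * (t + 2) = 2 * (t + 1) + 2 := by ring
        _ ≤ 2 ^ (t + 1) + 2 ^ (t + 1) := Nat.add_le_add ih h2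
        _ = 2 ^ (t + 2) := by ring

lemma exists_good_modulus (s m N : ℕ) (hs : 1 ≤ s) (hN : 7 ≤ N)
    (hms : 2 * (m * s) ≤ N - 3)
    (d : Fin s → ℕ) (hd1 : ∀ i, 1 ≤ d i) (hdb : ∀ i, d i < 2 ^ m) :
    ∃ j, 2 ≤ j ∧ j ≤ N ∧ ∀ i, ¬ (j ∣ d i) := by
  by_contra hcon
  push_neg at hcon
  set P : ℕ := ∏ i, d i with hP
  have hP0 : P ≠ 0 := by
    rw [hP, Finset.prod_ne_zero_iff]
    exact fun i _ => by have := hd1 i; omega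
  have hPlt : P < 2 ^ (m * s) := by
    calc P ≤ ∏ _i : Fin s, (2 ^ m - 1) := Finset.prod_le_prod' (fun i _ => by
            have := hdb i; omega)
      _ = (2 ^ m - 1) ^ s := by rw [Finset.prod_const, Finset.card_univ, Fintype.card_fin]
      _ < (2 ^ m) ^ s := Nat.pow_lt_pow_left (by have := Nat.one_le_two_pow (n := m); omega)
            (by omega)
      _ = 2 ^ (m * s) := by rw [← pow_mul]
  set k : ℕ := N / 2 with hk
  have hk0 : 0 < k := by omega
  have h2k : 2 * k ≤ N ∧ N ≤ 2 * k + 1 := by omega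
  have hCBdvd : Nat.centralBinom k ∣ P := by
    rw [← Nat.factorization_le_iff_dvd (Nat.centralBinom_pos k).ne' hP0]
    rw [Finsupp.le_def]
    intro p
    by_cases hp : p.Prime
    · set t := (Nat.centralBinom k).factorization p with htdef
      rcases Nat.eq_zero_or_pos t with ht | ht
      · omega
      have hptle : p ^ t ≤ 2 * k := by
        have h := Nat.pow_factorization_choose_le (p := p) (n := 2 * k) (k := k) (by omega)
        rw [htdef, Nat.centralBinom]
        exact h
      have hpt2 : 2 ≤ p ^ t :=
        le_trans hp.two_le (Nat.le_self_pow (by omega) p)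
      obtain ⟨i, hdvd⟩ := hcon (p ^ t) hpt2 (by omega)
      have hdP : d i ∣ P := Finset.dvd_prod_of_mem d (Finset.mem_univ i)
      exact (Nat.Prime.pow_dvd_iff_le_factorization hp hP0).mp (hdvd.trans hdP)
    · rw [Nat.factorization_eq_zero_of_not_prime _ hp]
      exact Nat.zero_le _
  have hCBle : Nat.centralBinom k ≤ P := Nat.le_of_dvd (by omega) hCBdvd
  have hsize : 4 ^ k ≤ 2 * k * Nat.centralBinom k :=
    Nat.four_pow_le_two_mul_self_mul_centralBinom k hk0
  have hbig : 2 ^ (N - 1) < N * 2 ^ (m * s) := by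
    calc 2 ^ (N - 1) ≤ 2 ^ (2 * k) := Nat.pow_le_pow_right (by norm_num) (by omega)
      _ = 4 ^ k := by rw [pow_mul]; norm_num
      _ ≤ 2 * k * Nat.centralBinom k := hsize
      _ ≤ N * P := Nat.mul_le_mul (by omega) hCBle
      _ < N * 2 ^ (m * s) := by
          exact Nat.mul_lt_mul_of_le_of_lt (le_refl N) hPlt (by omega)
  set t : ℕ := N - 1 - m * s with htd
  have hsplit : 2 ^ (N - 1) = 2 ^ (m * s) * 2 ^ t := by
    rw [← pow_add]
    congr 1
    omega
  have h2tN : 2 ^ t < N := by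
    rw [hsplit] at hbig
    have := Nat.lt_of_mul_lt_mul_left (a := 2 ^ (m * s))
      (by calc 2 ^ (m*s) * 2 ^ t < N * 2 ^ (m*s) := hbig
            _ = 2 ^ (m*s) * N := by ring)
    exact this
  have h2t : N + 1 ≤ 2 * t := by omega
  have := two_mul_le_two_pow t
  omega

/-- Let `G` be a graph with `n` nodes whose edges are enumerated `e₁, …, e_m`
(here via an injective numbering `num` of the edges with values `< m`), let `s ≥ 1`
with `n²s ≥ 7`, and give edge `eᵢ` the weight `2^(i-1)`.  Then for any `s` even cycles
`C₁, …, C_s` of `G` there is a modulus `2 ≤ j ≤ n²s` such that no circulation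
`c_w(Cᵢ)` is divisible by `j`; consequently the weight function `eᵢ ↦ 2^(i-1) mod j`
(whose values are bounded by `n²s`) gives nonzero circulation to each `Cᵢ`. -/
theorem small_weights_nonzero_circulation {V : Type*} [Fintype V] [DecidableEq V]
    (G : SimpleGraph V) [DecidableRel G.Adj]
    (num : Sym2 V → ℕ)
    (hinj : Set.InjOn num G.edgeSet)
    (hlt : ∀ e ∈ G.edgeSet, num e < G.edgeFinset.card)
    (s : ℕ) (hs : 1 ≤ s)
    (h7 : 7 ≤ (Fintype.card V) ^ 2 * s)
    (C : Fin s → Σ v : V, G.Walk v v)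
    (hcyc : ∀ i, (C i).2.IsCycle)
    (heven : ∀ i, Even (C i).2.length) :
    ∃ j : ℕ, 2 ≤ j ∧ j ≤ (Fintype.card V) ^ 2 * s ∧
      ∀ i : Fin s,
        ¬ ((j : ℤ) ∣ altSum ((C i).2.edges.map fun e => (2 : ℤ) ^ num e)) ∧
        circulation (fun e => ((2 : ℤ) ^ num e) % (j : ℤ)) (C i).2.edges ≠ 0 := by
  classical
  set n : ℕ := Fintype.card V with hn
  set m : ℕ := G.edgeFinset.card with hmdef
  set N : ℕ := n ^ 2 * s with hN
  -- edges of each cycle are in the edge set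
  have hsub : ∀ i : Fin s, ∀ e ∈ (C i).2.edges, e ∈ G.edgeSet := by
    intro i e he
    exact (C i).2.edges_subset_edgeSet he
  have hlenpos : ∀ i : Fin s, 3 ≤ (C i).2.edges.length := by
    intro i
    rw [SimpleGraph.Walk.length_edges]
    exact (hcyc i).three_le_length
  -- the key facts about each circulation
  have hfacts : ∀ i : Fin s,
      altSum ((C i).2.edges.map fun e => (2 : ℤ) ^ num e) ≠ 0 ∧
        (altSum ((C i).2.edges.map fun e => (2 : ℤ) ^ num e)).natAbs < 2 ^ m := by
    intro i
    apply altSum_pow_facts num m _ (hcyc i).edges_nodup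
      (List.ne_nil_of_length_pos (by have := hlenpos i; omega))
    · intro e he f hf h
      exact hinj (hsub i e he) (hsub i f hf) h
    · intro e he
      exact hlt e (hsub i e he)
  -- bound 3 ≤ m
  have hm3 : 3 ≤ m := by
    set i0 : Fin s := ⟨0, hs⟩
    set l := (C i0).2.edges with hl
    have hnd : l.Nodup := (hcyc i0).edges_nodup
    have hcard : (l.toFinset.image num).card = l.length := by
      rw [Finset.card_image_of_injOn, List.toFinset_card_of_nodup hnd]
      intro x hx y hy hxy
      exact hinj (hsub i0 x (List.mem_toFinset.mp hx)) (hsub i0 y (List.mem_toFinset.mp hy)) hxy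
    have hsubr : l.toFinset.image num ⊆ Finset.range m := by
      intro a ha
      simp only [Finset.mem_image, List.mem_toFinset, Finset.mem_range] at ha ⊢
      obtain ⟨e, he, rfl⟩ := ha
      exact hlt e (hsub i0 e he)
    have h4 := Finset.card_le_card hsubr
    rw [hcard, Finset.card_range] at h4
    have h3 : 3 ≤ l.length := hlenpos i0
    omega
  -- bound 2m ≤ n(n-1)
  have h2m : 2 * m ≤ n * (n - 1) := by
    have h1 : m ≤ n.choose 2 := G.card_edgeFinset_le_card_choose_two
    have h2 : n.choose 2 = n * (n - 1) / 2 := Nat.choose_two_right n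
    set q := n * (n - 1)
    omega
  have hn3 : 3 ≤ n := by
    by_contra h
    push_neg at h
    interval_cases n <;> omega
  have hms : 2 * (m * s) ≤ N - 3 := by
    have key : 2 * (m * s) + 3 ≤ N := by
      obtain ⟨n', hn'⟩ : ∃ n', n = n' + 3 := ⟨n - 3, by omega⟩
      rw [hN, hn']
      rw [hn', show n' + 3 - 1 = n' + 2 from rfl] at h2m
      nlinarith [Nat.mul_le_mul h2m (le_refl s), hs]
    omega
  -- apply the modulus lemma
  obtain ⟨j, hj2, hjN, hbad⟩ := exists_good_modulus s m N hs h7 hms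
    (fun i => (altSum ((C i).2.edges.map fun e => (2 : ℤ) ^ num e)).natAbs)
    (fun i => Int.natAbs_pos.mpr (hfacts i).1)
    (fun i => (hfacts i).2)
  refine ⟨j, hj2, hjN, fun i => ?_⟩
  have hnotdvd : ¬ ((j : ℤ) ∣ altSum ((C i).2.edges.map fun e => (2 : ℤ) ^ num e)) := by
    intro hdvd
    apply hbad i
    have := Int.natAbs_dvd_natAbs.mpr hdvd
    rwa [Int.natAbs_natCast] at this
  refine ⟨hnotdvd, ?_⟩
  intro h0
  rw [circulation, abs_eq_zero] at h0
  have hd := altSum_sub_emod_dvd (j : ℤ) (C i).2.edges (fun e => (2 : ℤ) ^ num e)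
  rw [h0, sub_zero] at hd
  exact hnotdvd hd
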